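/- Let n be even and G(i) ⊆ G_{3,n} be the subgraph induced by the stars S_{3(i)} and S_{3(i+n/2)}. There exists an assignment of labels to the 6 vertices of G(i) satisfying the radio labeling condition |f(u) − f(v)| ≥ n + 2 − d(u,v) (distances in G_{3,n}) for all distinct pairs, whose span is at most 5n/2 + 3. -/

import Mathlib

open SimpleGraph


/-- The star graph on `m` vertices with center `0`. -/
def starGraph (m : ℕ) : SimpleGraph (Fin m) :=
  SimpleGraph.fromRel (fun a _ => (a : ℕ) = 0)

/-- The path graph on `n` vertices `0, 1, …, n-1`. -/
def pathGraph' (n : ℕ) : SimpleGraph (Fin n) :=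
  SimpleGraph.fromRel (fun a b => (a : ℕ) + 1 = b)

/-- The stacked-book graph `G_{m,n} = S_m □ P_n`. -/
def bookGraph (m n : ℕ) : SimpleGraph (Fin m × Fin n) :=
  (_root_.starGraph m).boxProd (pathGraph' n)

lemma walk_len_lb {V : Type*} {G : SimpleGraph V} (φ : V → ℤ)
    (h : ∀ a b, G.Adj a b → |φ a - φ b| ≤ 1) :
    ∀ {u v : V} (w : G.Walk u v), |φ u - φ v| ≤ (w.length : ℤ) := by
  intro u v w
  induction w with
  | nil => simp
  | @cons a b c hab p ih =>
      have h1 := h a b hab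
      have h2 : |φ a - φ c| ≤ |φ a - φ b| + |φ b - φ c| := abs_sub_le _ _ _
      simp only [SimpleGraph.Walk.length_cons]
      push_cast
      linarith

lemma dist_lb {V : Type*} {G : SimpleGraph V} (φ : V → ℤ)
    (h : ∀ a b, G.Adj a b → |φ a - φ b| ≤ 1) {u v : V} (hr : G.Reachable u v) :
    |φ u - φ v| ≤ (G.dist u v : ℤ) := by
  obtain ⟨w, hw⟩ := hr.exists_walk_length_eq_dist
  rw [← hw]
  exact walk_len_lb φ h w

lemma starGraph3_adj {a b : Fin 3} :
    (_root_.starGraph 3).Adj a b ↔ a ≠ b ∧ ((a : ℕ) = 0 ∨ (b : ℕ) = 0) := by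
  simp [_root_.starGraph, SimpleGraph.fromRel_adj]

lemma starGraph3_preconnected : (_root_.starGraph 3).Preconnected := by
  have key : ∀ v : Fin 3, (_root_.starGraph 3).Reachable 0 v := by
    intro v
    by_cases h : v = 0
    · subst h; exact SimpleGraph.Reachable.refl _
    · exact (starGraph3_adj.mpr ⟨fun h' => h h'.symm, Or.inl rfl⟩).reachable
  intro u v
  exact (key u).symm.trans (key v)

lemma pathGraph'_eq (n : ℕ) : pathGraph' n = SimpleGraph.pathGraph n := by
  ext u v
  simp only [pathGraph', SimpleGraph.fromRel_adj, SimpleGraph.pathGraph_adj, ne_eq,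
    Fin.ext_iff]
  omega

lemma bookGraph3_preconnected (n : ℕ) : (bookGraph 3 n).Preconnected := by
  unfold bookGraph
  rw [pathGraph'_eq]
  exact starGraph3_preconnected.boxProd (SimpleGraph.pathGraph_preconnected n)

lemma book_lip (n : ℕ) (c : Fin 3 → ℤ) (h1 : |c 0 - c 1| ≤ 1) (h2 : |c 0 - c 2| ≤ 1) :
    ∀ a b : Fin 3 × Fin n, (bookGraph 3 n).Adj a b →
      |(((a.2 : ℕ) : ℤ) + c a.1) - (((b.2 : ℕ) : ℤ) + c b.1)| ≤ 1 := by
  rintro ⟨ka, ja⟩ ⟨kb, jb⟩ hab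
  rw [bookGraph, SimpleGraph.boxProd_adj] at hab
  rcases hab with ⟨hs, hj⟩ | ⟨hp, hk⟩
  · rw [starGraph3_adj] at hs
    simp only at hj
    subst hj
    have heq : (((ja : ℕ) : ℤ) + c ka) - (((ja : ℕ) : ℤ) + c kb) = c ka - c kb := by ring
    rw [heq]
    obtain ⟨hne, h0⟩ := hs
    fin_cases ka <;> fin_cases kb <;> simp_all <;> rw [abs_sub_comm] <;> assumption
  · simp only at hk
    subst hk
    simp only [pathGraph', SimpleGraph.fromRel_adj, ne_eq, Fin.ext_iff] at hp
    have heq : (((ja : ℕ) : ℤ) + c ka) - (((jb : ℕ) : ℤ) + c ka) = ((ja:ℕ):ℤ) - ((jb:ℕ):ℤ) := by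
      ring
    rw [heq, abs_le]
    omega

/-- `f` is a radio labeling of `G` for diameter `D`:
`|f u - f v| ≥ D + 1 - d(u,v)` for all distinct `u, v`. -/
def IsRadioLabeling {V : Type*} (G : SimpleGraph V) (D : ℕ) (f : V → ℕ) : Prop :=
  ∀ u v : V, u ≠ v → (D : ℤ) + 1 - G.dist u v ≤ |(f u : ℤ) - (f v : ℤ)|

/-- The span of a labeling: maximum label minus minimum label. -/
noncomputable def span {V : Type*} (f : V → ℕ) : ℕ :=
  sSup (Set.range f) - sInf (Set.range f)

/-- The radio number of the stacked-book graph `G_{m,n}` (whose diameter is `n+1`). -/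
noncomputable def rnBook (m n : ℕ) : ℕ :=
  sInf {s | ∃ f : Fin m × Fin n → ℕ, IsRadioLabeling (bookGraph m n) (n + 1) f ∧ span f = s}

theorem Gi_upper_bound_m_three (n : ℕ) (hn : n % 2 = 0) (i : ℕ) (hi : i < n / 2) :
    ∃ f : Fin 3 × Fin n → ℕ,
      let S : Finset (Fin 3 × Fin n) :=
        Finset.univ.filter (fun p => (p.2 : ℕ) = i ∨ (p.2 : ℕ) = i + n / 2)
      (∀ u ∈ S, ∀ v ∈ S, u ≠ v →
        (n : ℤ) + 2 - (bookGraph 3 n).dist u v ≤ |(f u : ℤ) - (f v : ℤ)|) ∧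
      sSup (f '' ↑S) - sInf (f '' ↑S) ≤ 5 * n / 2 + 3 := by
  have hn2 : n = 2 * (n / 2) := by omega
  set m := n / 2 with hm
  refine ⟨fun p => if (p.2 : ℕ) = i then
      (if (p.1 : ℕ) = 0 then 0 else if (p.1 : ℕ) = 1 then 4*m+3 else 2*m+1)
    else
      (if (p.1 : ℕ) = 0 then 3*m+2 else if (p.1 : ℕ) = 1 then m+1 else 5*m+3), ?_⟩
  intro S
  have hne : ¬ (i + m = i) := by omega
  constructor
  · intro u hu v hv huv
    have hu' : (u.2 : ℕ) = i ∨ (u.2 : ℕ) = i + m := by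
      simpa [S] using hu
    have hv' : (v.2 : ℕ) = i ∨ (v.2 : ℕ) = i + m := by
      simpa [S] using hv
    obtain ⟨ku, ju⟩ := u
    obtain ⟨kv, jv⟩ := v
    simp only at hu' hv'
    have hku : (ku : ℕ) = 0 ∨ (ku : ℕ) = 1 ∨ (ku : ℕ) = 2 := by omega
    have hkv : (kv : ℕ) = 0 ∨ (kv : ℕ) = 1 ∨ (kv : ℕ) = 2 := by omega
    have hreach := bookGraph3_preconnected n (ku, ju) (kv, jv)
    have hdA := dist_lb _ (book_lip n
        (fun k => if (k : ℕ) = 0 then 1 else if (k : ℕ) = 1 then 0 else 2)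
        (by norm_num) (by norm_num)) hreach
    have hdB := dist_lb _ (book_lip n
        (fun k => if (k : ℕ) = 0 then 1 else if (k : ℕ) = 1 then 2 else 0)
        (by norm_num) (by norm_num)) hreach
    have hdC := dist_lb _ (book_lip n
        (fun k => if (k : ℕ) = 0 then 0 else if (k : ℕ) = 1 then 1 else 1)
        (by norm_num) (by norm_num)) hreach
    have hdD := dist_lb _ (book_lip n
        (fun k => if (k : ℕ) = 0 then 1 else if (k : ℕ) = 1 then 0 else 0)
        (by norm_num) (by norm_num)) hreach
    have hdA1 := (le_abs_self _).trans hdA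
    have hdA2 := (neg_le_abs _).trans hdA
    have hdB1 := (le_abs_self _).trans hdB
    have hdB2 := (neg_le_abs _).trans hdB
    have hdC1 := (le_abs_self _).trans hdC
    have hdC2 := (neg_le_abs _).trans hdC
    have hdD1 := (le_abs_self _).trans hdD
    have hdD2 := (neg_le_abs _).trans hdD
    clear hdA hdB hdC hdD
    rcases hu' with hu' | hu' <;> rcases hv' with hv' | hv' <;>
      rcases hku with hku | hku | hku <;> rcases hkv with hkv | hkv | hkv <;>
      first
      | exact absurd (by rw [Prod.mk.injEq]
                         exact ⟨Fin.ext (by omega), Fin.ext (by omega)⟩) huv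
      | (simp only [hu', hv', hku, hkv, hne, reduceIte, ite_true, ite_false,
           eq_self_iff_true, if_true, if_false]
           at hdA1 hdA2 hdB1 hdB2 hdC1 hdC2 hdD1 hdD2 ⊢
         first
         | (refine le_trans ?_ (le_abs_self _); push_cast at *; omega)
         | (rw [abs_sub_comm]; refine le_trans ?_ (le_abs_self _); push_cast at *; omega))
  · refine le_trans (Nat.sub_le _ _) (csSup_le' ?_)
    rintro x ⟨p, -, rfl⟩
    dsimp only
    have : 5 * n / 2 + 3 = 5 * m + 3 := by omega
    rw [this]
    split_ifs <;> omega
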